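/- Let A be a finite nonempty set and let e be a k-edge operation on A, for some k ≥ 2. Then the algebra (A, e) (signature consisting of a single (k+1)-ary symbol interpreted as e) has term operations d(x, y) (binary), p(x, y, z) (ternary), and s(x_1, …, x_k) (k-ary) such that for all x, y ∈ A: p(x, y, y) = x; p(x, x, y) = d(x, y); d(x, d(x, y)) = d(x, y); s(y, x, x, …, x) = d(x, y); and for each i with 2 ≤ i ≤ k, s applied to the tuple with y in position i and x in all other positions equals x. -/

import Mathlib

/-- Terms over a functional signature `σ` with arities `ar`, in variables `Fin n`. -/
inductive Term (σ : Type) (ar : σ → ℕ) (n : ℕ) : Type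
  | var : Fin n → Term σ ar n
  | op : (s : σ) → (Fin (ar s) → Term σ ar n) → Term σ ar n

/-- Evaluation of a term in an algebra with basic operations `ops`. -/
def Term.eval {σ : Type} {ar : σ → ℕ} {A : Type} {n : ℕ}
    (ops : (s : σ) → (Fin (ar s) → A) → A) :
    Term σ ar n → (Fin n → A) → A
  | .var i, v => v i
  | .op s ts, v => ops s fun j => (ts j).eval ops v

/-- `B` is closed under all the basic operations `ops`. -/
def ClosedUnder {σ : Type} {ar : σ → ℕ} {A : Type}
    (ops : (s : σ) → (Fin (ar s) → A) → A) (B : Set A) : Prop :=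
  ∀ (s : σ) (a : Fin (ar s) → A), (∀ i, a i ∈ B) → ops s a ∈ B

/-- Coordinatewise operations on a product of two algebras. -/
def prodOps {σ : Type} {ar : σ → ℕ} {A B : Type}
    (opsA : (s : σ) → (Fin (ar s) → A) → A) (opsB : (s : σ) → (Fin (ar s) → B) → B) :
    (s : σ) → (Fin (ar s) → A × B) → A × B :=
  fun s a => (opsA s fun i => (a i).1, opsB s fun i => (a i).2)

/-- The term `t` witnesses that `B` absorbs the subalgebra on `U`. -/
def AbsWitness {σ : Type} {ar : σ → ℕ} {A : Type}
    (ops : (s : σ) → (Fin (ar s) → A) → A) {n : ℕ} (t : Term σ ar n)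
    (B U : Set A) : Prop :=
  ∀ (i : Fin n) (a : Fin n → A), (∀ j, a j ∈ U) → (∀ j, j ≠ i → a j ∈ B) →
    t.eval ops a ∈ B

/-- `B` absorbs the subalgebra on `U` (witnessed by some term). -/
def AbsorbsSub {σ : Type} {ar : σ → ℕ} {A : Type}
    (ops : (s : σ) → (Fin (ar s) → A) → A) (B U : Set A) : Prop :=
  ∃ (n : ℕ) (t : Term σ ar n), AbsWitness ops t B U

/-- The one-step link relation on the first coordinate. -/
def LinkA {A B : Type} (C : Set (A × B)) : A → A → Prop :=
  fun a a' => ∃ b, (a, b) ∈ C ∧ (a', b) ∈ C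

/-- The one-step link relation on the second coordinate. -/
def LinkB {A B : Type} (C : Set (A × B)) : B → B → Prop :=
  fun b b' => ∃ a, (a, b) ∈ C ∧ (a, b') ∈ C

/-- `e` is a `k`-edge operation. -/
def IsEdgeOp {A : Type} (k : ℕ) (e : (Fin (k + 1) → A) → A) : Prop :=
  (∀ x y : A, e (fun i => if i.val ≤ 1 then x else y) = y) ∧
  (∀ x y : A, e (fun i => if i.val = 0 ∨ i.val = 2 then x else y) = y) ∧
  (∀ i : Fin (k + 1), 3 ≤ i.val → ∀ x y : A,
    e (fun j => if j = i then x else y) = y)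


def dTerm (k : ℕ) : ℕ → Term Unit (fun _ => k + 1) 2
  | 0 => .var 1
  | j + 1 => .op () (fun i => if i.val = 1 then dTerm k j else .var 0)

def pAux (k : ℕ) : ℕ → Term Unit (fun _ => k + 1) 3
  | 0 => .var 2
  | j + 1 => .op () (fun i => if i.val = 1 then pAux k j else .var 1)

def pTerm (k m : ℕ) : Term Unit (fun _ => k + 1) 3 :=
  .op () (fun i => if i.val = 0 then .var 1 else if i.val = 1 then pAux k m else .var 0)

def sTerm (k : ℕ) (hk : 2 ≤ k) : ℕ → Term Unit (fun _ => k + 1) k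
  | 0 => .var ⟨0, by omega⟩
  | j + 1 => .op () (fun i =>
      if i.val = 1 then sTerm k hk j
      else if i.val = 0 ∨ i.val = 2 then .var ⟨1, by omega⟩
      else .var ⟨i.val - 1, by omega⟩)

lemma exists_idem_iter (A : Type) [Finite A] [Nonempty A] :
    ∃ m, 0 < m ∧ ∀ (f : A → A) (z : A), f^[m] (f^[m] z) = f^[m] z := by
  haveI : Fintype (A → A) := Fintype.ofFinite _
  set N := Fintype.card (A → A) with hN
  refine ⟨N.factorial, N.factorial_pos, ?_⟩
  intro f z
  obtain ⟨a, b, hab, hfab⟩ := Fintype.exists_ne_map_eq_of_card_lt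
    (fun i : Fin (N + 1) => f^[(i : ℕ)]) (by simp; exact hN.ge)
  have hne : (a : ℕ) ≠ (b : ℕ) := fun h => hab (Fin.ext h)
  set i := min (a : ℕ) (b : ℕ) with hidef
  set j := max (a : ℕ) (b : ℕ) with hjdef
  have hij : i < j := by omega
  have hjN : j ≤ N := by
    have ha := a.isLt; have hb := b.isLt; omega
  have hiter : f^[i] = f^[j] := by
    rcases le_total (a : ℕ) (b : ℕ) with h | h
    · simpa [hidef, hjdef, min_eq_left h, max_eq_right h] using hfab
    · simpa [hidef, hjdef, min_eq_right h, max_eq_left h] using hfab.symm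
  set p := j - i with hp
  have hstep : ∀ t, i ≤ t → f^[t + p] = f^[t] := by
    intro t ht
    have h1 : t + p = (t - i) + j := by omega
    have h2 : t = (t - i) + i := by omega
    rw [h1, Function.iterate_add, ← hiter, ← Function.iterate_add, ← h2]
  have hmul : ∀ c t, i ≤ t → f^[t + c * p] = f^[t] := by
    intro c
    induction c with
    | zero => simp
    | succ c ih =>
      intro t ht
      have h3 : t + (c + 1) * p = (t + c * p) + p := by ring
      rw [h3, hstep _ (by omega), ih t ht]
  have hppos : 0 < p := by omega
  have hpdvd : p ∣ N.factorial := Nat.dvd_factorial hppos (by omega)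
  obtain ⟨c, hc⟩ := hpdvd
  have hiN : i ≤ N.factorial := le_trans (by omega) (Nat.self_le_factorial N)
  calc f^[N.factorial] (f^[N.factorial] z) = f^[N.factorial + N.factorial] z := by
        rw [Function.iterate_add_apply]
    _ = f^[N.factorial + c * p] z := by rw [mul_comm, ← hc]
    _ = f^[N.factorial] z := by rw [hmul c _ hiN]


/-- from a `k`-edge operation `e` on a finite set `A`, the algebra
`(A, e)` has term operations `d`, `p`, `s` satisfying the listed identities. -/
theorem edge_term_yields_dps
    {A : Type} [Finite A] [Nonempty A] (k : ℕ) (hk : 2 ≤ k)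
    (e : (Fin (k + 1) → A) → A) (he : IsEdgeOp k e) :
    ∃ (d : Term Unit (fun _ => k + 1) 2) (p : Term Unit (fun _ => k + 1) 3)
      (s : Term Unit (fun _ => k + 1) k),
      let ops : (u : Unit) → (Fin (k + 1) → A) → A := fun _ => e
      (∀ x y : A, Term.eval ops p ![x, y, y] = x) ∧
      (∀ x y : A, Term.eval ops p ![x, x, y] = Term.eval ops d ![x, y]) ∧
      (∀ x y : A,
        Term.eval ops d ![x, Term.eval ops d ![x, y]] = Term.eval ops d ![x, y]) ∧
      (∀ x y : A,
        Term.eval ops s (fun i => if i.val = 0 then y else x) =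
          Term.eval ops d ![x, y]) ∧
      (∀ i : Fin k, 1 ≤ i.val → ∀ x y : A,
        Term.eval ops s (fun j => if j = i then y else x) = x) := by
  classical
  obtain ⟨he1, he2, he3⟩ := he
  obtain ⟨m, hm, hid⟩ := exists_idem_iter A
  obtain ⟨m', rfl⟩ : ∃ m', m = m' + 1 := ⟨m - 1, by omega⟩
  set ops : (u : Unit) → (Fin (k + 1) → A) → A := fun _ => e with hops
  set g : A → A → A := fun x z => e (fun i => if i.val = 1 then z else x) with hg
  have econst : ∀ x : A, e (fun _ => x) = x := by
    intro x; simpa using he1 x x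
  have gxx : ∀ x : A, g x x = x := by
    intro x; simp only [hg, ite_self]; exact econst x
  -- evaluation of dTerm
  have dEval : ∀ (j : ℕ) (x y : A),
      Term.eval ops (dTerm k j) ![x, y] = (g x)^[j] y := by
    intro j x y
    induction j with
    | zero => simp [dTerm, Term.eval]
    | succ j ih =>
      have harg : (fun i : Fin (k + 1) =>
          Term.eval ops (if i.val = 1 then dTerm k j else .var 0) ![x, y]) =
          fun i : Fin (k + 1) => if i.val = 1 then (g x)^[j] y else x := by
        funext i
        by_cases h : i.val = 1
        · rw [if_pos h, if_pos h]; exact ih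
        · rw [if_neg h, if_neg h]; simp [Term.eval]
      rw [dTerm, Term.eval, hops, harg, Function.iterate_succ_apply']
  -- evaluation of pAux
  have pAuxEval : ∀ (j : ℕ) (x y z : A),
      Term.eval ops (pAux k j) ![x, y, z] = (g y)^[j] z := by
    intro j x y z
    induction j with
    | zero => simp [pAux, Term.eval]
    | succ j ih =>
      have harg : (fun i : Fin (k + 1) =>
          Term.eval ops (if i.val = 1 then pAux k j else .var 1) ![x, y, z]) =
          fun i : Fin (k + 1) => if i.val = 1 then (g y)^[j] z else y := by
        funext i
        by_cases h : i.val = 1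
        · rw [if_pos h, if_pos h]; exact ih
        · rw [if_neg h, if_neg h]; simp [Term.eval]
      rw [pAux, Term.eval, hops, harg, Function.iterate_succ_apply']
  -- evaluation of sTerm at the (y, x, ..., x) tuple
  have sEval1 : ∀ (j : ℕ) (x y : A),
      Term.eval ops (sTerm k hk j) (fun i => if i.val = 0 then y else x) =
        (g x)^[j] y := by
    intro j x y
    induction j with
    | zero => simp [sTerm, Term.eval]
    | succ j ih =>
      have harg : (fun i : Fin (k + 1) =>
          Term.eval ops
            (if i.val = 1 then sTerm k hk j
             else if i.val = 0 ∨ i.val = 2 then Term.var ⟨1, by omega⟩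
             else Term.var ⟨i.val - 1, by omega⟩)
            (fun t : Fin k => if t.val = 0 then y else x)) =
          fun i : Fin (k + 1) => if i.val = 1 then (g x)^[j] y else x := by
        funext i
        by_cases h : i.val = 1
        · rw [if_pos h, if_pos h]; exact ih
        · rw [if_neg h, if_neg h]
          by_cases h2 : i.val = 0 ∨ i.val = 2
          · rw [if_pos h2]
            simp only [Term.eval]
            rw [if_neg (by simp)]
          · rw [if_neg h2]
            simp only [Term.eval]
            rw [if_neg (by omega)]
      rw [sTerm, Term.eval, hops, harg, Function.iterate_succ_apply']
  -- evaluation of sTerm with y in position i ≥ 1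
  have sEval2 : ∀ (j : ℕ) (i : Fin k), 1 ≤ i.val → ∀ x y : A,
      Term.eval ops (sTerm k hk j) (fun t => if t = i then y else x) = x := by
    intro j i hi x y
    induction j with
    | zero =>
      simp only [sTerm, Term.eval]
      rw [if_neg (by simp [Fin.ext_iff]; omega)]
    | succ j ih =>
      rw [sTerm, Term.eval, hops]
      rcases Nat.eq_or_lt_of_le hi with h1 | h2
      · -- i.val = 1
        have harg : (fun t : Fin (k + 1) =>
            Term.eval ops
              (if t.val = 1 then sTerm k hk j
               else if t.val = 0 ∨ t.val = 2 then Term.var ⟨1, by omega⟩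
               else Term.var ⟨t.val - 1, by omega⟩)
              (fun s : Fin k => if s = i then y else x)) =
            fun t : Fin (k + 1) => if t.val = 0 ∨ t.val = 2 then y else x := by
          funext t
          by_cases h : t.val = 1
          · rw [if_pos h, if_neg (by omega)]; exact ih
          · rw [if_neg h]
            by_cases h2 : t.val = 0 ∨ t.val = 2
            · rw [if_pos h2, if_pos h2]
              simp only [Term.eval]
              rw [if_pos (by simp [Fin.ext_iff]; omega)]
            · rw [if_neg h2, if_neg h2]
              simp only [Term.eval]
              rw [if_neg (by simp [Fin.ext_iff]; omega)]
        rw [harg]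
        exact he2 y x
      · -- i.val ≥ 2
        have hik : i.val + 1 < k + 1 := by omega
        have harg : (fun t : Fin (k + 1) =>
            Term.eval ops
              (if t.val = 1 then sTerm k hk j
               else if t.val = 0 ∨ t.val = 2 then Term.var ⟨1, by omega⟩
               else Term.var ⟨t.val - 1, by omega⟩)
              (fun s : Fin k => if s = i then y else x)) =
            fun t : Fin (k + 1) =>
              if t = (⟨i.val + 1, hik⟩ : Fin (k + 1)) then y else x := by
          funext t
          by_cases h : t.val = 1
          · rw [if_pos h, if_neg (by simp [Fin.ext_iff]; omega)]; exact ih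
          · rw [if_neg h]
            by_cases h2 : t.val = 0 ∨ t.val = 2
            · rw [if_pos h2, if_neg (by simp [Fin.ext_iff]; omega)]
              simp only [Term.eval]
              rw [if_neg (by simp [Fin.ext_iff]; omega)]
            · rw [if_neg h2]
              simp only [Term.eval]
              by_cases hc : t.val - 1 = i.val
              · rw [if_pos (by simp [Fin.ext_iff]; omega),
                    if_pos (by simp [Fin.ext_iff]; omega)]
              · rw [if_neg (by simp [Fin.ext_iff]; omega),
                    if_neg (by simp [Fin.ext_iff]; omega)]
        rw [harg]
        exact he3 ⟨i.val + 1, hik⟩ (by simp; omega) y x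
  -- the witnesses
  refine ⟨dTerm k (m' + 1), pTerm k m', sTerm k hk (m' + 1), ?_, ?_, ?_, ?_, ?_⟩
  · -- p(x,y,y) = x
    intro x y
    show Term.eval ops (pTerm k m') ![x, y, y] = x
    rw [pTerm, Term.eval, hops]
    have harg : (fun i : Fin (k + 1) =>
        Term.eval ops
          (if i.val = 0 then Term.var 1 else if i.val = 1 then pAux k m' else Term.var 0)
          ![x, y, y]) =
        fun i : Fin (k + 1) => if i.val ≤ 1 then y else x := by
      funext i
      by_cases h : i.val = 0
      · rw [if_pos h, if_pos (by omega)]; simp [Term.eval]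
      · rw [if_neg h]
        by_cases h1 : i.val = 1
        · rw [if_pos h1, if_pos (by omega)]
          rw [pAuxEval m' x y y]
          exact Function.iterate_fixed (gxx y) m'
        · rw [if_neg h1, if_neg (by omega)]; simp [Term.eval]
    rw [harg]
    exact he1 y x
  · -- p(x,x,y) = d(x,y)
    intro x y
    show Term.eval ops (pTerm k m') ![x, x, y] =
      Term.eval ops (dTerm k (m' + 1)) ![x, y]
    rw [pTerm, Term.eval, hops, dEval]
    have harg : (fun i : Fin (k + 1) =>
        Term.eval ops
          (if i.val = 0 then Term.var 1 else if i.val = 1 then pAux k m' else Term.var 0)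
          ![x, x, y]) =
        fun i : Fin (k + 1) => if i.val = 1 then (g x)^[m'] y else x := by
      funext i
      by_cases h : i.val = 0
      · rw [if_pos h, if_neg (by omega)]; simp [Term.eval]
      · rw [if_neg h]
        by_cases h1 : i.val = 1
        · rw [if_pos h1, if_pos h1]; exact pAuxEval m' x x y
        · rw [if_neg h1, if_neg h1]; simp [Term.eval]
    rw [harg, Function.iterate_succ_apply']
  · -- d(x, d(x,y)) = d(x,y)
    intro x y
    show Term.eval ops (dTerm k (m' + 1))
        ![x, Term.eval ops (dTerm k (m' + 1)) ![x, y]] =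
      Term.eval ops (dTerm k (m' + 1)) ![x, y]
    rw [dEval, dEval]
    exact hid (g x) y
  · -- s(y,x,...,x) = d(x,y)
    intro x y
    show Term.eval ops (sTerm k hk (m' + 1)) (fun i => if i.val = 0 then y else x) =
      Term.eval ops (dTerm k (m' + 1)) ![x, y]
    rw [sEval1, dEval]
  · -- s(x,...,y,...,x) = x
    intro i hi x y
    exact sEval2 (m' + 1) i hi x y
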